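/- arXiv:2105.12222 — 9 statements merged into one kernel-verified Lean document; each statement's English description precedes it below -/
import Mathlib

section
/- Let A : X → Y be a continuous linear operator with closed range between real Hilbert spaces, let b ∈ Y, let b̄ be the orthogonal projection of b onto the range of A, and let C = A⁻¹{b̄}. Then for every x ∈ X, the projection of x onto C equals x − A†(Ax − b), where A† is the Moore-Penrose inverse of A. -/
open scoped RealInnerProductSpace

/-- If `A : X → Y` is a continuous linear operator with closed range between real
Hilbert spaces, `b ∈ Y`, `bbar` is the orthogonal projection of `b` onto the range of `A`
(characterized as the nearest point of `ran A` to `b`), `B` is the Moore-Penrose inverse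
of `A` (characterized by the four Penrose conditions), and `C = A⁻¹{bbar}`, then for every
`x`, the projection of `x` onto `C` is `x - B (A x - b)`, i.e. this point lies in `C` and
is the nearest point of `C` to `x`. -/
theorem stmt_0 {X Y : Type*}
    [NormedAddCommGroup X] [InnerProductSpace ℝ X] [CompleteSpace X]
    [NormedAddCommGroup Y] [InnerProductSpace ℝ Y] [CompleteSpace Y]
    (A : X →L[ℝ] Y) (hclosed : IsClosed (Set.range A))
    (b bbar : Y)
    (hbbar : bbar ∈ Set.range A ∧ ∀ y ∈ Set.range A, ‖b - bbar‖ ≤ ‖b - y‖)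
    (B : Y →L[ℝ] X)
    (pen1 : ∀ x : X, A (B (A x)) = A x)
    (pen2 : ∀ y : Y, B (A (B y)) = B y)
    (pen3 : ∀ y z : Y, ⟪A (B y), z⟫ = ⟪y, A (B z)⟫)
    (pen4 : ∀ x z : X, ⟪B (A x), z⟫ = ⟪x, B (A z)⟫)
    (x : X) :
    x - B (A x - b) ∈ A ⁻¹' {bbar} ∧
      ∀ z ∈ A ⁻¹' {bbar}, ‖x - (x - B (A x - b))‖ ≤ ‖x - z‖ := by

  obtain ⟨hb1, hb2⟩ := hbbar
  -- orthogonality: b - A (B b) ⊥ range A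
  have hperp : ∀ u : X, ⟪b - A (B b), A u⟫ = 0 := by
    intro u
    have h3 := pen3 b (A u)
    rw [inner_sub_left, h3, pen1]
    ring
  have hbbar_eq : bbar = A (B b) := by
    obtain ⟨w, hw⟩ := hb1
    have hle : ‖b - bbar‖ ≤ ‖b - A (B b)‖ := hb2 (A (B b)) ⟨B b, rfl⟩
    have hinner : ⟪b - A (B b), A (B b) - bbar⟫ = 0 := by
      rw [inner_sub_right, hperp (B b), ← hw, hperp w]; ring
    have hsplit : ‖b - bbar‖^2 = ‖b - A (B b)‖^2 + ‖A (B b) - bbar‖^2 := by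
      have hd : b - bbar = (b - A (B b)) + (A (B b) - bbar) := by abel
      rw [hd, norm_add_sq_real, hinner]; ring
    have hz : ‖A (B b) - bbar‖ = 0 := by
      nlinarith [norm_nonneg (A (B b) - bbar), norm_nonneg (b - bbar),
        norm_nonneg (b - A (B b))]
    have := norm_eq_zero.mp hz
    have := sub_eq_zero.mp this
    exact this.symm
  have hmem : A (x - B (A x - b)) = bbar := by
    rw [map_sub, map_sub, map_sub, pen1, hbbar_eq]
    abel
  refine ⟨hmem, ?_⟩
  intro z hz
  have hAz : A z = bbar := hz
  have hkey : B (A x - b) = B (A (x - z)) := by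
    rw [map_sub, map_sub, hAz, hbbar_eq, map_sub, pen2]
  have hxx : x - (x - B (A x - b)) = B (A (x - z)) := by
    rw [hkey]; abel
  rw [hxx]
  set w := x - z with hw
  have hortho : ⟪B (A w), w - B (A w)⟫ = 0 := by
    rw [pen4]
    have : A (w - B (A w)) = 0 := by rw [map_sub, pen1, sub_self]
    rw [map_sub, pen1, sub_self, map_zero, inner_zero_right]
  have hpyth : ‖w‖^2 = ‖B (A w)‖^2 + ‖w - B (A w)‖^2 := by
    have hd : w = B (A w) + (w - B (A w)) := by abel
    calc ‖w‖^2 = ‖B (A w) + (w - B (A w))‖^2 := by rw [← hd]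
    _ = ‖B (A w)‖^2 + ‖w - B (A w)‖^2 := by rw [norm_add_sq_real, hortho]; ring
  have : ‖B (A w)‖ ≤ ‖w‖ := by
    nlinarith [norm_nonneg (B (A w)), norm_nonneg w, norm_nonneg (w - B (A w))]
  exact this
end

section
/- Let e ∈ ℝⁿ and f ∈ ℝᵐ be nonzero vectors. Then the range of the linear map 𝒜 : ℝ^{m×n} → ℝᵐ × ℝⁿ, T ↦ (Te, Tᵀf), equals the orthogonal complement of the span of (f, −e), i.e., ran 𝒜 = {(y,x) ∈ ℝᵐ × ℝⁿ : ⟨f,y⟩ = ⟨e,x⟩}. -/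
open Matrix

/-- For nonzero `e ∈ ℝⁿ`, `f ∈ ℝᵐ`, the range of `𝒜 : T ↦ (T e, Tᵀ f)` equals
`{(y,x) : ⟨f,y⟩ = ⟨e,x⟩}`, the orthogonal complement of the span of `(f, -e)`. -/
theorem stmt_2 {m n : ℕ} (e : Fin n → ℝ) (f : Fin m → ℝ) (he : e ≠ 0) (hf : f ≠ 0) :
    Set.range (fun T : Matrix (Fin m) (Fin n) ℝ => (T.mulVec e, T.transpose.mulVec f))
      = {p : (Fin m → ℝ) × (Fin n → ℝ) | f ⬝ᵥ p.1 = e ⬝ᵥ p.2} := by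
  have hee : e ⬝ᵥ e ≠ 0 := fun h => he ((dotProduct_self_eq_zero).mp h)
  have hff : f ⬝ᵥ f ≠ 0 := fun h => hf ((dotProduct_self_eq_zero).mp h)
  have hE : (∑ i, e i * e i) ≠ 0 := hee
  have hF : (∑ i, f i * f i) ≠ 0 := hff
  ext ⟨y, x⟩
  simp only [Set.mem_range, Set.mem_setOf_eq, Prod.mk.injEq]
  constructor
  · rintro ⟨T, hT1, hT2⟩
    rw [← hT1, ← hT2, Matrix.dotProduct_mulVec, Matrix.mulVec_transpose,
      dotProduct_comm]
  · intro h
    have h' : (∑ i, x i * e i) = ∑ i, f i * y i := by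
      rw [show (∑ i, f i * y i) = f ⬝ᵥ y from rfl, h]
      exact Finset.sum_congr rfl fun _ _ => mul_comm _ _
    refine ⟨fun i j => y i * e j / (e ⬝ᵥ e) + f i * x j / (f ⬝ᵥ f)
      - (f ⬝ᵥ y) * f i * e j / ((e ⬝ᵥ e) * (f ⬝ᵥ f)), ?_, ?_⟩
    · funext i
      simp only [mulVec, dotProduct, sub_mul, add_mul, Finset.sum_sub_distrib,
        Finset.sum_add_distrib, div_mul_eq_mul_div, mul_assoc]
      rw [← Finset.sum_div, ← Finset.sum_div, ← Finset.sum_div,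
        ← Finset.mul_sum, ← Finset.mul_sum, h']
      have hD : (∑ k, (∑ i, f i * y i) * (f i * (e k * e k)))
          = (∑ i, f i * y i) * f i * ∑ k, e k * e k := by
        rw [mul_assoc, Finset.mul_sum, Finset.mul_sum]
      rw [hD]
      field_simp
      have hE2 : (∑ x, e x ^ 2) * (∑ x, e x ^ 2)⁻¹ = 1 := mul_inv_cancel₀ (by simpa [sq] using hE)
      linear_combination (y i - f i * (∑ x, f x * y x) * (∑ x, f x ^ 2)⁻¹) * hE2
    · funext j
      simp only [mulVec, Matrix.transpose, Matrix.of_apply, transpose_apply, dotProduct, sub_mul, add_mul,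
        Finset.sum_sub_distrib, Finset.sum_add_distrib, div_mul_eq_mul_div, mul_assoc]
      rw [← Finset.sum_div, ← Finset.sum_div, ← Finset.sum_div]
      have hA : (∑ k, y k * (e j * f k)) = e j * ∑ k, f k * y k := by
        rw [Finset.mul_sum]; exact Finset.sum_congr rfl fun _ _ => by ring
      have hB : (∑ k, f k * (x j * f k)) = x j * ∑ k, f k * f k := by
        rw [Finset.mul_sum]; exact Finset.sum_congr rfl fun _ _ => by ring
      have hC : (∑ k, (∑ i, f i * y i) * (f k * (e j * f k)))
          = (∑ i, f i * y i) * e j * ∑ k, f k * f k := by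
        rw [mul_assoc, Finset.mul_sum, Finset.mul_sum]
        exact Finset.sum_congr rfl fun _ _ => by ring
      rw [hA, hB, hC]
      field_simp
      have hF2 : (∑ x, f x ^ 2) * (∑ x, f x ^ 2)⁻¹ = 1 := mul_inv_cancel₀ (by simpa [sq] using hF)
      linear_combination (x j - (e j * ∑ x, f x * y x) * (∑ x, e x ^ 2)⁻¹) * hF2
end

section
/- Let e ∈ ℝⁿ and f ∈ ℝᵐ be nonzero. Define 𝒜(T) = (Te, Tᵀf) and, for (y,x) ∈ ℝᵐ × ℝⁿ, define B(y,x) = (1/‖e‖²)(y eᵀ − (⟨f,y⟩/(‖e‖²+‖f‖²)) f eᵀ) + (1/‖f‖²)(f xᵀ − (⟨e,x⟩/(‖e‖²+‖f‖²)) f eᵀ). Then B is the Moore-Penrose inverse of 𝒜, i.e., B satisfies the four Penrose conditions: 𝒜B𝒜 = 𝒜, B𝒜B = B, 𝒜B is self-adjoint, and B𝒜 is self-adjoint. -/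
open Matrix

variable {m n : ℕ}

lemma vmv_mulVec (a : Fin m → ℝ) (b v : Fin n → ℝ) :
    (vecMulVec a b).mulVec v = (b ⬝ᵥ v) • a := by
  funext i
  simp only [mulVec, vecMulVec_apply, dotProduct, Pi.smul_apply, smul_eq_mul, Finset.sum_mul]
  exact Finset.sum_congr rfl fun j _ => by ring

lemma vmv_t_mulVec (a : Fin m → ℝ) (b : Fin n → ℝ) (v : Fin m → ℝ) :
    (vecMulVec a b)ᵀ.mulVec v = (a ⬝ᵥ v) • b := by
  funext j
  simp only [mulVec, transpose_apply, vecMulVec_apply, dotProduct, Pi.smul_apply, smul_eq_mul,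
    Finset.sum_mul]
  exact Finset.sum_congr rfl fun i _ => by ring

lemma dsum_vmv_left (a : Fin m → ℝ) (b : Fin n → ℝ) (T : Matrix (Fin m) (Fin n) ℝ) :
    ∑ i, ∑ j, (vecMulVec a b) i j * T i j = a ⬝ᵥ T.mulVec b := by
  simp only [vecMulVec_apply, mulVec, dotProduct, Finset.mul_sum]
  exact Finset.sum_congr rfl fun i _ => Finset.sum_congr rfl fun j _ => by ring

lemma dsum_vmv_right (a : Fin m → ℝ) (b : Fin n → ℝ) (T : Matrix (Fin m) (Fin n) ℝ) :
    ∑ i, ∑ j, T i j * (vecMulVec a b) i j = a ⬝ᵥ T.mulVec b := by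
  simp only [vecMulVec_apply, mulVec, dotProduct, Finset.mul_sum]
  exact Finset.sum_congr rfl fun i _ => Finset.sum_congr rfl fun j _ => by ring

lemma dsum_expand_left (r r' c c' : ℝ) (M1 M2 M3 T : Matrix (Fin m) (Fin n) ℝ) :
    ∑ i, ∑ j, (r • (M1 - c • M2) + r' • (M3 - c' • M2)) i j * T i j
    = r * (∑ i, ∑ j, M1 i j * T i j) - r * c * (∑ i, ∑ j, M2 i j * T i j)
      + (r' * (∑ i, ∑ j, M3 i j * T i j) - r' * c' * (∑ i, ∑ j, M2 i j * T i j)) := by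
  simp only [Matrix.add_apply, Matrix.sub_apply, Matrix.smul_apply, smul_eq_mul,
    add_mul, sub_mul, mul_assoc, Finset.sum_add_distrib, Finset.sum_sub_distrib,
    ← Finset.mul_sum]
  ring

lemma dsum_expand_right (r r' c c' : ℝ) (M1 M2 M3 T : Matrix (Fin m) (Fin n) ℝ) :
    ∑ i, ∑ j, T i j * (r • (M1 - c • M2) + r' • (M3 - c' • M2)) i j
    = r * (∑ i, ∑ j, T i j * M1 i j) - r * c * (∑ i, ∑ j, T i j * M2 i j)
      + (r' * (∑ i, ∑ j, T i j * M3 i j) - r' * c' * (∑ i, ∑ j, T i j * M2 i j)) := by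
  simp only [Matrix.add_apply, Matrix.sub_apply, Matrix.smul_apply, smul_eq_mul,
    mul_add, mul_sub, mul_left_comm, Finset.sum_add_distrib, Finset.sum_sub_distrib,
    ← Finset.mul_sum]
  ring

/-- For nonzero `e ∈ ℝⁿ`, `f ∈ ℝᵐ`, the map
`B(y,x) = (1/‖e‖²)(y eᵀ − (⟨f,y⟩/(‖e‖²+‖f‖²)) f eᵀ) + (1/‖f‖²)(f xᵀ − (⟨e,x⟩/(‖e‖²+‖f‖²)) f eᵀ)`
satisfies the four Penrose conditions for `𝒜 : T ↦ (T e, Tᵀ f)`, hence is the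
Moore-Penrose inverse of `𝒜`. Self-adjointness is with respect to the product inner
product on `ℝᵐ × ℝⁿ` and the Frobenius inner product on `ℝ^{m×n}`. -/
theorem stmt_5 {m n : ℕ} (e : Fin n → ℝ) (f : Fin m → ℝ) (he : e ≠ 0) (hf : f ≠ 0)
    (A : Matrix (Fin m) (Fin n) ℝ → (Fin m → ℝ) × (Fin n → ℝ))
    (hA : ∀ T, A T = (T.mulVec e, T.transpose.mulVec f))
    (B : (Fin m → ℝ) × (Fin n → ℝ) → Matrix (Fin m) (Fin n) ℝ)
    (hB : ∀ y x, B (y, x) =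
      (e ⬝ᵥ e)⁻¹ • (vecMulVec y e - ((f ⬝ᵥ y) / (e ⬝ᵥ e + f ⬝ᵥ f)) • vecMulVec f e)
      + (f ⬝ᵥ f)⁻¹ • (vecMulVec f x - ((e ⬝ᵥ x) / (e ⬝ᵥ e + f ⬝ᵥ f)) • vecMulVec f e)) :
    (∀ T, A (B (A T)) = A T) ∧
    (∀ p, B (A (B p)) = B p) ∧
    (∀ p q : (Fin m → ℝ) × (Fin n → ℝ),
      (A (B p)).1 ⬝ᵥ q.1 + (A (B p)).2 ⬝ᵥ q.2 = p.1 ⬝ᵥ (A (B q)).1 + p.2 ⬝ᵥ (A (B q)).2) ∧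
    (∀ S T : Matrix (Fin m) (Fin n) ℝ,
      ∑ i, ∑ j, (B (A S)) i j * T i j = ∑ i, ∑ j, S i j * (B (A T)) i j) := by
  have hee : (0:ℝ) < e ⬝ᵥ e :=
    lt_of_le_of_ne (Finset.sum_nonneg fun i _ => mul_self_nonneg _)
      (Ne.symm fun h => he (dotProduct_self_eq_zero.mp h))
  have hff : (0:ℝ) < f ⬝ᵥ f :=
    lt_of_le_of_ne (Finset.sum_nonneg fun i _ => mul_self_nonneg _)
      (Ne.symm fun h => hf (dotProduct_self_eq_zero.mp h))
  have hee' : e ⬝ᵥ e ≠ 0 := ne_of_gt hee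
  have hff' : f ⬝ᵥ f ≠ 0 := ne_of_gt hff
  have hs : e ⬝ᵥ e + f ⬝ᵥ f ≠ 0 := by positivity
  have hAB : ∀ y x, A (B (y, x)) =
      (y + (((e ⬝ᵥ x - f ⬝ᵥ y) / (e ⬝ᵥ e + f ⬝ᵥ f)) • f),
       x + (((f ⬝ᵥ y - e ⬝ᵥ x) / (e ⬝ᵥ e + f ⬝ᵥ f)) • e)) := by
    intro y x
    rw [hB, hA]
    refine Prod.ext ?_ ?_
    · show _ = y + _
      simp only [add_mulVec, sub_mulVec, smul_mulVec, vmv_mulVec,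
        dotProduct_comm x e]
      funext i
      simp only [Pi.add_apply, Pi.sub_apply, Pi.smul_apply, smul_eq_mul]
      field_simp
      ring
    · show _ = x + _
      simp only [transpose_add, transpose_sub, transpose_smul, add_mulVec, sub_mulVec,
        smul_mulVec, vmv_t_mulVec, dotProduct_comm y f]
      funext j
      simp only [Pi.add_apply, Pi.sub_apply, Pi.smul_apply, smul_eq_mul]
      field_simp
      ring
  have key : ∀ T : Matrix (Fin m) (Fin n) ℝ, e ⬝ᵥ Tᵀ.mulVec f = f ⬝ᵥ T.mulVec e := by
    intro T
    rw [dotProduct_mulVec, vecMul_transpose, dotProduct_comm]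
  refine ⟨?_, ?_, ?_, ?_⟩
  · intro T
    rw [hA T]
    rw [hAB, key]
    simp
  · rintro ⟨y, x⟩
    rw [hAB y x, hB, hB]
    simp only [dotProduct_add, dotProduct_smul, smul_eq_mul]
    ext i j
    simp only [Matrix.add_apply, Matrix.sub_apply, Matrix.smul_apply, vecMulVec_apply,
      Pi.add_apply, Pi.smul_apply, smul_eq_mul]
    field_simp
    ring
  · rintro ⟨y, x⟩ ⟨u, v⟩
    simp only [hAB]
    simp only [add_dotProduct, dotProduct_add, smul_dotProduct, dotProduct_smul, smul_eq_mul,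
      dotProduct_comm f u, dotProduct_comm e v, dotProduct_comm f y, dotProduct_comm e x]
    field_simp
    ring
  · intro S T
    rw [hA S, hA T, hB, hB, key S, key T]
    rw [dsum_expand_left, dsum_expand_right]
    rw [dsum_vmv_left, dsum_vmv_left, dsum_vmv_left, dsum_vmv_right, dsum_vmv_right,
      dsum_vmv_right]
    have h1 : S *ᵥ e ⬝ᵥ T *ᵥ e = T *ᵥ e ⬝ᵥ S *ᵥ e := dotProduct_comm _ _
    have h2 : f ⬝ᵥ T *ᵥ Sᵀ *ᵥ f = f ⬝ᵥ S *ᵥ Tᵀ *ᵥ f := by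
      rw [dotProduct_mulVec, dotProduct_mulVec, ← mulVec_transpose, ← mulVec_transpose,
        dotProduct_comm, transpose_transpose]
    rw [h1, h2]
    ring
end

section
/- Let e ∈ ℝⁿ and f ∈ ℝᵐ be nonzero, let s ∈ ℝᵐ, r ∈ ℝⁿ with the consistency condition ⟨f,s⟩ = ⟨e,r⟩, and let C = {T ∈ ℝ^{m×n} : Te = s and Tᵀf = r}. Then C is nonempty, and for every T ∈ ℝ^{m×n}, the Frobenius-norm projection of T onto C is P_C(T) = T − (1/‖e‖²)((Te−s)eᵀ − (⟨f, Te−s⟩/(‖e‖²+‖f‖²)) f eᵀ) − (1/‖f‖²)(f(Tᵀf−r)ᵀ − (⟨e, Tᵀf−r⟩/(‖e‖²+‖f‖²)) f eᵀ). -/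
open Matrix

lemma stmt9_dot_pos {n : ℕ} (e : Fin n → ℝ) (he : e ≠ 0) : 0 < e ⬝ᵥ e := by
  have h0 : 0 ≤ e ⬝ᵥ e := Finset.sum_nonneg fun i _ => mul_self_nonneg _
  rcases h0.lt_or_eq with h | h
  · exact h
  · exact absurd (dotProduct_self_eq_zero.mp h.symm) he

lemma stmt9_vmv {m n : ℕ} (u : Fin m → ℝ) (v : Fin n → ℝ) (w : Fin n → ℝ) :
    (vecMulVec u v) *ᵥ w = (v ⬝ᵥ w) • u := by
  funext i
  simp [vecMulVec, mulVec, dotProduct, Finset.mul_sum, mul_comm, mul_assoc, mul_left_comm]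

lemma stmt9_vmvT {m n : ℕ} (u : Fin m → ℝ) (v : Fin n → ℝ) :
    (vecMulVec u v)ᵀ = vecMulVec v u := by
  funext i j; simp [vecMulVec, mul_comm]

lemma stmt9_swap {m n : ℕ} (T : Matrix (Fin m) (Fin n) ℝ) (e : Fin n → ℝ) (f : Fin m → ℝ) :
    e ⬝ᵥ (Tᵀ *ᵥ f) = f ⬝ᵥ (T *ᵥ e) := by
  rw [dotProduct_mulVec, vecMul_transpose, dotProduct_comm]

lemma stmt9_mem {m n : ℕ} (e : Fin n → ℝ) (f : Fin m → ℝ) (he : e ≠ 0) (hf : f ≠ 0)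
    (s : Fin m → ℝ) (r : Fin n → ℝ) (hconsist : f ⬝ᵥ s = e ⬝ᵥ r)
    (T : Matrix (Fin m) (Fin n) ℝ) :
    (T - (e ⬝ᵥ e)⁻¹ • (vecMulVec (T.mulVec e - s) e
            - ((f ⬝ᵥ (T.mulVec e - s)) / (e ⬝ᵥ e + f ⬝ᵥ f)) • vecMulVec f e)
         - (f ⬝ᵥ f)⁻¹ • (vecMulVec f (T.transpose.mulVec f - r)
            - ((e ⬝ᵥ (T.transpose.mulVec f - r)) / (e ⬝ᵥ e + f ⬝ᵥ f)) • vecMulVec f e)).mulVec e = s ∧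
    (T - (e ⬝ᵥ e)⁻¹ • (vecMulVec (T.mulVec e - s) e
            - ((f ⬝ᵥ (T.mulVec e - s)) / (e ⬝ᵥ e + f ⬝ᵥ f)) • vecMulVec f e)
         - (f ⬝ᵥ f)⁻¹ • (vecMulVec f (T.transpose.mulVec f - r)
            - ((e ⬝ᵥ (T.transpose.mulVec f - r)) / (e ⬝ᵥ e + f ⬝ᵥ f)) • vecMulVec f e)).transpose.mulVec f = r := by
  have hα : 0 < e ⬝ᵥ e := stmt9_dot_pos e he
  have hβ : 0 < f ⬝ᵥ f := stmt9_dot_pos f hf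
  have hσ : e ⬝ᵥ e + f ⬝ᵥ f ≠ 0 := by positivity
  have hcb : e ⬝ᵥ (Tᵀ *ᵥ f - r) = f ⬝ᵥ (T *ᵥ e - s) := by
    rw [dotProduct_sub, dotProduct_sub, stmt9_swap, hconsist]
  have hbe : (Tᵀ *ᵥ f - r) ⬝ᵥ e = f ⬝ᵥ (T *ᵥ e - s) := by
    rw [dotProduct_comm]; exact hcb
  have haf : (T *ᵥ e - s) ⬝ᵥ f = f ⬝ᵥ (T *ᵥ e - s) := dotProduct_comm _ _
  constructor
  · rw [sub_mulVec, sub_mulVec, smul_mulVec, smul_mulVec,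
      sub_mulVec, sub_mulVec, smul_mulVec, smul_mulVec,
      stmt9_vmv, stmt9_vmv, stmt9_vmv, hbe, hcb]
    funext i
    have hai : (T *ᵥ e - s) i = (T *ᵥ e) i - s i := rfl
    simp only [Pi.sub_apply, Pi.smul_apply, smul_eq_mul, hai]
    field_simp
    ring
  · rw [transpose_sub, transpose_sub, transpose_smul, transpose_smul,
      transpose_sub, transpose_sub, transpose_smul, transpose_smul,
      stmt9_vmvT, stmt9_vmvT, stmt9_vmvT]
    rw [sub_mulVec, sub_mulVec, smul_mulVec, smul_mulVec,
      sub_mulVec, sub_mulVec, smul_mulVec, smul_mulVec,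
      stmt9_vmv, stmt9_vmv, stmt9_vmv, haf, hcb]
    funext i
    have hbi : (Tᵀ *ᵥ f - r) i = (Tᵀ *ᵥ f) i - r i := rfl
    simp only [Pi.sub_apply, Pi.smul_apply, smul_eq_mul, hbi]
    field_simp
    ring

/-- For nonzero `e ∈ ℝⁿ`, `f ∈ ℝᵐ` and `s ∈ ℝᵐ`, `r ∈ ℝⁿ` with `⟨f,s⟩ = ⟨e,r⟩`, the set
`C = {T : Te = s, Tᵀf = r}` is nonempty and the Frobenius projection of any `T` onto `C`
is `T − (1/‖e‖²)((Te−s)eᵀ − (⟨f,Te−s⟩/(‖e‖²+‖f‖²)) f eᵀ)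
     − (1/‖f‖²)(f(Tᵀf−r)ᵀ − (⟨e,Tᵀf−r⟩/(‖e‖²+‖f‖²)) f eᵀ)`. -/
theorem stmt_9 {m n : ℕ} (e : Fin n → ℝ) (f : Fin m → ℝ) (he : e ≠ 0) (hf : f ≠ 0)
    (s : Fin m → ℝ) (r : Fin n → ℝ) (hconsist : f ⬝ᵥ s = e ⬝ᵥ r)
    (C : Set (Matrix (Fin m) (Fin n) ℝ))
    (hC : C = {T | T.mulVec e = s ∧ T.transpose.mulVec f = r}) :
    C.Nonempty ∧
    ∀ T : Matrix (Fin m) (Fin n) ℝ,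
      (T - (e ⬝ᵥ e)⁻¹ • (vecMulVec (T.mulVec e - s) e
            - ((f ⬝ᵥ (T.mulVec e - s)) / (e ⬝ᵥ e + f ⬝ᵥ f)) • vecMulVec f e)
         - (f ⬝ᵥ f)⁻¹ • (vecMulVec f (T.transpose.mulVec f - r)
            - ((e ⬝ᵥ (T.transpose.mulVec f - r)) / (e ⬝ᵥ e + f ⬝ᵥ f)) • vecMulVec f e)) ∈ C ∧
      ∀ S ∈ C,
        (∑ i, ∑ j, (T - (T - (e ⬝ᵥ e)⁻¹ • (vecMulVec (T.mulVec e - s) e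
            - ((f ⬝ᵥ (T.mulVec e - s)) / (e ⬝ᵥ e + f ⬝ᵥ f)) • vecMulVec f e)
         - (f ⬝ᵥ f)⁻¹ • (vecMulVec f (T.transpose.mulVec f - r)
            - ((e ⬝ᵥ (T.transpose.mulVec f - r)) / (e ⬝ᵥ e + f ⬝ᵥ f)) • vecMulVec f e))) i j ^ 2)
          ≤ ∑ i, ∑ j, (T - S) i j ^ 2 := by
  subst hC
  have hα : 0 < e ⬝ᵥ e := stmt9_dot_pos e he
  have hβ : 0 < f ⬝ᵥ f := stmt9_dot_pos f hf
  refine ⟨⟨_, stmt9_mem e f he hf s r hconsist 0⟩, fun T => ?_⟩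
  set P : Matrix (Fin m) (Fin n) ℝ :=
    T - (e ⬝ᵥ e)⁻¹ • (vecMulVec (T.mulVec e - s) e
            - ((f ⬝ᵥ (T.mulVec e - s)) / (e ⬝ᵥ e + f ⬝ᵥ f)) • vecMulVec f e)
         - (f ⬝ᵥ f)⁻¹ • (vecMulVec f (T.transpose.mulVec f - r)
            - ((e ⬝ᵥ (T.transpose.mulVec f - r)) / (e ⬝ᵥ e + f ⬝ᵥ f)) • vecMulVec f e) with hPdef
  have hPm := stmt9_mem e f he hf s r hconsist T
  refine ⟨hPm, fun S hS => ?_⟩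
  obtain ⟨hS1, hS2⟩ := hS
  set D : Matrix (Fin m) (Fin n) ℝ := S - P with hDdef
  have hDe : D *ᵥ e = 0 := by
    rw [hDdef, sub_mulVec, hS1, hPm.1, sub_self]
  have hDf : Dᵀ *ᵥ f = 0 := by
    rw [hDdef, transpose_sub, sub_mulVec, hS2, hPm.2, sub_self]
  -- cross terms
  have hDe' : ∀ i, ∑ j, e j * D i j = 0 := by
    intro i
    have := congrFun hDe i
    simpa [mulVec, dotProduct, mul_comm] using this
  have hDf' : ∀ j, ∑ i, f i * D i j = 0 := by
    intro j
    have := congrFun hDf j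
    simpa [mulVec, dotProduct, transpose_apply, mul_comm] using this
  have h1 : ∀ u : Fin m → ℝ, ∑ i, u i * ∑ j, e j * D i j = 0 := by
    intro u; simp [hDe']
  have h2 : ∀ v : Fin n → ℝ, ∑ i, f i * ∑ j, v j * D i j = 0 := by
    intro v
    calc ∑ i, f i * ∑ j, v j * D i j
        = ∑ i, ∑ j, v j * (f i * D i j) :=
          Finset.sum_congr rfl fun i _ => by
            rw [Finset.mul_sum]; exact Finset.sum_congr rfl fun j _ => by ring
      _ = ∑ j, ∑ i, v j * (f i * D i j) := by rw [Finset.sum_comm]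
      _ = ∑ j, v j * ∑ i, f i * D i j :=
          Finset.sum_congr rfl fun j _ => by rw [Finset.mul_sum]
      _ = 0 := by simp [hDf']
  have hTP : ∀ i j, (T - P) i j =
      (e ⬝ᵥ e)⁻¹ * ((T *ᵥ e - s) i * e j)
      + (-((e ⬝ᵥ e)⁻¹ * ((f ⬝ᵥ (T *ᵥ e - s)) / (e ⬝ᵥ e + f ⬝ᵥ f)))
         - (f ⬝ᵥ f)⁻¹ * ((e ⬝ᵥ (Tᵀ *ᵥ f - r)) / (e ⬝ᵥ e + f ⬝ᵥ f))) * (f i * e j)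
      + (f ⬝ᵥ f)⁻¹ * (f i * (Tᵀ *ᵥ f - r) j) := by
    intro i j
    simp only [hPdef, Matrix.sub_apply, Matrix.smul_apply, vecMulVec_apply, smul_eq_mul]
    ring
  have hcross : ∑ i, ∑ j, (T - P) i j * D i j = 0 := by
    have key : ∀ i j, (T - P) i j * D i j =
        (e ⬝ᵥ e)⁻¹ * ((T *ᵥ e - s) i * (e j * D i j))
        + (-((e ⬝ᵥ e)⁻¹ * ((f ⬝ᵥ (T *ᵥ e - s)) / (e ⬝ᵥ e + f ⬝ᵥ f)))
           - (f ⬝ᵥ f)⁻¹ * ((e ⬝ᵥ (Tᵀ *ᵥ f - r)) / (e ⬝ᵥ e + f ⬝ᵥ f))) * (f i * (e j * D i j))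
        + (f ⬝ᵥ f)⁻¹ * (f i * ((Tᵀ *ᵥ f - r) j * D i j)) := by
      intro i j; rw [hTP]; ring
    simp only [key, Finset.sum_add_distrib, ← Finset.mul_sum]
    rw [h1, h1, h2]
    ring
  have hexp : ∀ i j, (T - S) i j ^ 2 =
      (T - P) i j ^ 2 - 2 * ((T - P) i j * D i j) + D i j ^ 2 := by
    intro i j
    have : (T - S) i j = (T - P) i j - D i j := by
      simp [hDdef, Matrix.sub_apply]
    rw [this]; ring
  have hDnn : 0 ≤ ∑ i, ∑ j, D i j ^ 2 :=
    Finset.sum_nonneg fun i _ => Finset.sum_nonneg fun j _ => sq_nonneg _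
  calc ∑ i, ∑ j, (T - P) i j ^ 2
      = ∑ i, ∑ j, (T - P) i j ^ 2 - 2 * (∑ i, ∑ j, (T - P) i j * D i j)
        + ∑ i, ∑ j, D i j ^ 2 - ∑ i, ∑ j, D i j ^ 2 := by rw [hcross]; ring
    _ ≤ ∑ i, ∑ j, (T - P) i j ^ 2 - 2 * (∑ i, ∑ j, (T - P) i j * D i j)
        + ∑ i, ∑ j, D i j ^ 2 := by linarith
    _ = ∑ i, ∑ j, (T - S) i j ^ 2 := by
        simp only [hexp, Finset.sum_add_distrib, Finset.sum_sub_distrib, Finset.mul_sum]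
end

section
/- Let e = (1,…,1) ∈ ℝⁿ, f = (1,…,1) ∈ ℝᵐ, let s ∈ ℝᵐ and r ∈ ℝⁿ satisfy Σᵢ sᵢ = Σⱼ rⱼ, and let C = {T ∈ ℝ^{m×n} : every row sum of T equals the corresponding entry of s and every column sum equals the corresponding entry of r}. Then C is nonempty and, for every T ∈ ℝ^{m×n}, the (i,j)-entry of the Frobenius projection of T onto C is T_{ij} + (s_i − ρ_i(T))/n + (r_j − κ_j(T))/m + (Σᵢρ_i(T) − Σⱼrⱼ)/(mn), where ρ_i(T) is the i-th row sum and κ_j(T) the j-th column sum of T. -/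
open Matrix

lemma cross_zero {m n : ℕ} (a : Fin m → ℝ) (b : Fin n → ℝ)
    (D : Matrix (Fin m) (Fin n) ℝ) (hrow : ∀ i, ∑ j, D i j = 0)
    (hcol : ∀ j, ∑ i, D i j = 0) :
    ∑ i, ∑ j, (a i + b j) * D i j = 0 := by
  have h1 : ∀ i, ∑ j, a i * D i j = 0 := by
    intro i; rw [← Finset.mul_sum, hrow, mul_zero]
  have h2 : ∑ i, ∑ j, b j * D i j = 0 := by
    rw [Finset.sum_comm]
    refine Finset.sum_eq_zero fun j _ => ?_
    rw [← Finset.mul_sum, hcol, mul_zero]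
  calc ∑ i, ∑ j, (a i + b j) * D i j
      = ∑ i, ((∑ j, a i * D i j) + ∑ j, b j * D i j) := by
        simp [add_mul, Finset.sum_add_distrib]
    _ = 0 := by rw [Finset.sum_add_distrib]; simp [h1, h2]

/-- Romero's formula: with all-ones vectors, `s ∈ ℝᵐ`, `r ∈ ℝⁿ` with `Σ s = Σ r`, the set
`C` of matrices with row sums `s` and column sums `r` is nonempty, and the Frobenius
projection of `T` onto `C` has `(i,j)` entry
`T i j + (s i − ρ i)/n + (r j − κ j)/m + (Σ ρ − Σ r)/(m n)`,
where `ρ`, `κ` are the row and column sums of `T`. -/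
theorem stmt_10 {m n : ℕ} (hm : 0 < m) (hn : 0 < n)
    (s : Fin m → ℝ) (r : Fin n → ℝ) (hconsist : ∑ i, s i = ∑ j, r j)
    (C : Set (Matrix (Fin m) (Fin n) ℝ))
    (hC : C = {T | (∀ i, ∑ j, T i j = s i) ∧ (∀ j, ∑ i, T i j = r j)}) :
    C.Nonempty ∧
    ∀ T : Matrix (Fin m) (Fin n) ℝ,
      (Matrix.of fun i j =>
          T i j + (s i - ∑ j', T i j') / n + (r j - ∑ i', T i' j) / m
            + ((∑ i', ∑ j', T i' j') - ∑ j', r j') / (m * n)) ∈ C ∧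
      ∀ S ∈ C,
        (∑ i, ∑ j, (T - Matrix.of fun i j =>
            T i j + (s i - ∑ j', T i j') / n + (r j - ∑ i', T i' j) / m
              + ((∑ i', ∑ j', T i' j') - ∑ j', r j') / (m * n)) i j ^ 2)
          ≤ ∑ i, ∑ j, (T - S) i j ^ 2 := by
  have hm' : (m:ℝ) ≠ 0 := Nat.cast_ne_zero.mpr hm.ne'
  have hn' : (n:ℝ) ≠ 0 := Nat.cast_ne_zero.mpr hn.ne'
  subst hC
  have key : ∀ T : Matrix (Fin m) (Fin n) ℝ,
      (Matrix.of fun i j =>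
          T i j + (s i - ∑ j', T i j') / n + (r j - ∑ i', T i' j) / m
            + ((∑ i', ∑ j', T i' j') - ∑ j', r j') / (m * n))
        ∈ {T : Matrix (Fin m) (Fin n) ℝ |
            (∀ i, ∑ j, T i j = s i) ∧ (∀ j, ∑ i, T i j = r j)} := by
    intro T
    constructor
    · intro i
      simp only [Matrix.of_apply]
      rw [Finset.sum_add_distrib, Finset.sum_add_distrib, Finset.sum_add_distrib,
        Finset.sum_const, Finset.sum_const, Finset.card_univ, Fintype.card_fin,
        ← Finset.sum_div, Finset.sum_sub_distrib]
      rw [show (∑ j, ∑ i', T i' j) = ∑ i', ∑ j', T i' j' from Finset.sum_comm]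
      rw [nsmul_eq_mul, nsmul_eq_mul]
      field_simp
      ring
    · intro j
      simp only [Matrix.of_apply]
      rw [Finset.sum_add_distrib, Finset.sum_add_distrib, Finset.sum_add_distrib,
        Finset.sum_const, Finset.sum_const, Finset.card_univ, Fintype.card_fin,
        ← Finset.sum_div, Finset.sum_sub_distrib]
      rw [nsmul_eq_mul, nsmul_eq_mul, hconsist]
      field_simp
      ring
  refine ⟨⟨_, key 0⟩, fun T => ⟨key T, ?_⟩⟩
  intro S hS
  set P : Matrix (Fin m) (Fin n) ℝ := Matrix.of fun i j =>
      T i j + (s i - ∑ j', T i j') / n + (r j - ∑ i', T i' j) / m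
        + ((∑ i', ∑ j', T i' j') - ∑ j', r j') / (m * n) with hP
  have hPC : P ∈ {T : Matrix (Fin m) (Fin n) ℝ |
      (∀ i, ∑ j, T i j = s i) ∧ (∀ j, ∑ i, T i j = r j)} := key T
  have hrow : ∀ i, ∑ j, (P - S) i j = 0 := by
    intro i
    simp only [Matrix.sub_apply, Finset.sum_sub_distrib, hPC.1 i, hS.1 i, sub_self]
  have hcol : ∀ j, ∑ i, (P - S) i j = 0 := by
    intro j
    simp only [Matrix.sub_apply, Finset.sum_sub_distrib, hPC.2 j, hS.2 j, sub_self]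
  set a : Fin m → ℝ := fun i => -((s i - ∑ j', T i j') / n
      + ((∑ i', ∑ j', T i' j') - ∑ j', r j') / (m * n)) with ha
  set b : Fin n → ℝ := fun j => -((r j - ∑ i', T i' j) / m) with hb
  have hTP : ∀ i j, (T - P) i j = a i + b j := by
    intro i j
    simp only [Matrix.sub_apply, hP, Matrix.of_apply, ha, hb]
    ring
  have hcross := cross_zero a b (P - S) hrow hcol
  have e1 : ∀ i j, (T - S) i j ^ 2
      = (T - P) i j ^ 2 + (P - S) i j ^ 2 + 2 * ((a i + b j) * (P - S) i j) := by
    intro i j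
    have h := hTP i j
    simp only [Matrix.sub_apply] at h ⊢
    rw [show T i j - S i j = (T i j - P i j) + (P i j - S i j) by ring, h]
    ring
  have expand : ∑ i, ∑ j, (T - S) i j ^ 2
      = (∑ i, ∑ j, (T - P) i j ^ 2) + (∑ i, ∑ j, (P - S) i j ^ 2)
        + 2 * ∑ i, ∑ j, (a i + b j) * (P - S) i j := by
    simp only [e1, Finset.sum_add_distrib, Finset.mul_sum]
  rw [expand, hcross, mul_zero, add_zero]
  exact le_add_of_nonneg_right (by positivity)
end

section
/- Let e, f ∈ ℝⁿ be nonzero, set E = ee ᵀ/‖e‖², F = ffᵀ/‖f‖², and let γ ∈ ℝ. Let C = {T ∈ ℝ^{n×n} : Te = γe and Tᵀf = γf}. Then C is nonempty (γI ∈ C), and for every T ∈ ℝ^{n×n}, the Frobenius projection of T onto C equals γI + (I − F)(T − γI)(I − E). -/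
open Matrix

private lemma proj_fix' {n : ℕ} (v : Fin n → ℝ) (hv : v ≠ 0) :
    ((v ⬝ᵥ v)⁻¹ • vecMulVec v v) *ᵥ v = v := by
  have h : vecMulVec v v *ᵥ v = (v ⬝ᵥ v) • v := by
    ext i
    simp [mulVec, vecMulVec, dotProduct, Finset.mul_sum, mul_comm, mul_left_comm, mul_assoc]
  have hvv : v ⬝ᵥ v ≠ 0 := by simpa using hv
  rw [smul_mulVec, h, smul_smul, inv_mul_cancel₀ hvv, one_smul]

private lemma aux_ineq {n : ℕ} (A D : Matrix (Fin n) (Fin n) ℝ)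
    (h : (∑ i, ∑ j, A i j * D i j) = 0) :
    ∑ i, ∑ j, A i j ^ 2 ≤ ∑ i, ∑ j, (A + D) i j ^ 2 := by
  have expand : ∀ i j : Fin n, (A i j + D i j) ^ 2
      = A i j ^ 2 + D i j ^ 2 + 2 * (A i j * D i j) := fun _ _ => by ring
  have hD : (0:ℝ) ≤ ∑ i, ∑ j, D i j ^ 2 := by positivity
  have : ∑ i, ∑ j, (A + D) i j ^ 2
      = (∑ i, ∑ j, A i j ^ 2) + (∑ i, ∑ j, D i j ^ 2) + 2 * ∑ i, ∑ j, A i j * D i j := by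
    simp only [Matrix.add_apply, expand, Finset.sum_add_distrib, Finset.mul_sum]
  rw [this, h]
  linarith

/-- Glunt–Hayden–Reams: for nonzero `e, f ∈ ℝⁿ`, `E = eeᵀ/‖e‖²`, `F = ffᵀ/‖f‖²`,
`γ ∈ ℝ`, and `C = {T : Te = γe, Tᵀf = γf}`, we have `γI ∈ C` and the Frobenius
projection of `T` onto `C` is `γI + (I − F)(T − γI)(I − E)`. -/
theorem stmt_11 {n : ℕ} (e f : Fin n → ℝ) (he : e ≠ 0) (hf : f ≠ 0) (γ : ℝ)
    (E F : Matrix (Fin n) (Fin n) ℝ)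
    (hE : E = (e ⬝ᵥ e)⁻¹ • vecMulVec e e) (hF : F = (f ⬝ᵥ f)⁻¹ • vecMulVec f f)
    (C : Set (Matrix (Fin n) (Fin n) ℝ))
    (hC : C = {T | T.mulVec e = γ • e ∧ T.transpose.mulVec f = γ • f}) :
    (γ • (1 : Matrix (Fin n) (Fin n) ℝ)) ∈ C ∧
    ∀ T : Matrix (Fin n) (Fin n) ℝ,
      (γ • (1 : Matrix (Fin n) (Fin n) ℝ) + (1 - F) * (T - γ • 1) * (1 - E)) ∈ C ∧
      ∀ S ∈ C,
        (∑ i, ∑ j, (T - (γ • (1 : Matrix (Fin n) (Fin n) ℝ)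
            + (1 - F) * (T - γ • 1) * (1 - E))) i j ^ 2)
          ≤ ∑ i, ∑ j, (T - S) i j ^ 2 := by
  subst hC
  have hEe : E *ᵥ e = e := by rw [hE]; exact proj_fix' e he
  have hFf : F *ᵥ f = f := by rw [hF]; exact proj_fix' f hf
  have hFsymm : Fᵀ = F := by
    rw [hF, transpose_smul]
    congr 1
    ext i j; simp [vecMulVec, mul_comm]
  have h1Ee : (1 - E) *ᵥ e = 0 := by rw [sub_mulVec, one_mulVec, hEe, sub_self]
  have h1Ff : (1 - F) *ᵥ f = 0 := by rw [sub_mulVec, one_mulVec, hFf, sub_self]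
  have hid : (γ • (1 : Matrix (Fin n) (Fin n) ℝ)) ∈
      {T : Matrix (Fin n) (Fin n) ℝ | T *ᵥ e = γ • e ∧ Tᵀ *ᵥ f = γ • f} := by
    constructor <;> simp [smul_mulVec, one_mulVec, transpose_smul]
  refine ⟨hid, fun T => ?_⟩
  set M := T - γ • (1 : Matrix (Fin n) (Fin n) ℝ) with hM
  set P := γ • (1 : Matrix (Fin n) (Fin n) ℝ) + (1 - F) * M * (1 - E) with hP
  have hPmem : P ∈ {T : Matrix (Fin n) (Fin n) ℝ | T *ᵥ e = γ • e ∧ Tᵀ *ᵥ f = γ • f} := by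
    constructor
    · rw [hP, add_mulVec, smul_mulVec, one_mulVec, Matrix.mul_assoc,
        ← mulVec_mulVec, ← mulVec_mulVec, h1Ee, mulVec_zero, mulVec_zero, add_zero]
    · rw [hP]
      simp only [transpose_add, transpose_smul, transpose_one, transpose_mul, transpose_sub,
        hFsymm]
      rw [add_mulVec, smul_mulVec, one_mulVec, ← mulVec_mulVec, ← mulVec_mulVec,
        h1Ff, mulVec_zero, mulVec_zero, add_zero]
  refine ⟨hPmem, fun S hS => ?_⟩
  set A := T - P with hA
  set D := P - S with hD
  -- D annihilates e and fᵀ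
  have hDe : D *ᵥ e = 0 := by
    rw [hD, sub_mulVec, hPmem.1, hS.1, sub_self]
  have hDf : Dᵀ *ᵥ f = 0 := by
    rw [hD, transpose_sub, sub_mulVec, hPmem.2, hS.2, sub_self]
  -- key products vanish
  have hDF : Dᵀ * F = 0 := by
    ext i j
    have h0 : ∑ k, D k i * f k = 0 := by
      have := congrFun hDf i
      simpa [mulVec, dotProduct, transpose_apply] using this
    rw [hF]
    simp only [mul_apply, Matrix.smul_apply, vecMulVec_apply, transpose_apply,
      Matrix.zero_apply, smul_eq_mul]
    have : ∀ k : Fin n, D k i * ((f ⬝ᵥ f)⁻¹ * (f k * f j))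
        = ((f ⬝ᵥ f)⁻¹ * f j) * (D k i * f k) := fun k => by ring
    rw [Finset.sum_congr rfl fun k _ => this k, ← Finset.mul_sum, h0, mul_zero]
  have hED : E * Dᵀ = 0 := by
    ext i j
    have h0 : ∑ k, e k * D j k = 0 := by
      have := congrFun hDe j
      simpa [mulVec, dotProduct, mul_comm] using this
    rw [hE]
    simp only [mul_apply, Matrix.smul_apply, vecMulVec_apply, transpose_apply,
      Matrix.zero_apply, smul_eq_mul]
    have : ∀ k : Fin n, (e ⬝ᵥ e)⁻¹ * (e i * e k) * D j k
        = ((e ⬝ᵥ e)⁻¹ * e i) * (e k * D j k) := fun k => by ring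
    rw [Finset.sum_congr rfl fun k _ => this k, ← Finset.mul_sum, h0, mul_zero]
  have expand : (1 - F) * M * (1 - E) = M - F * M - M * E + F * M * E := by
    simp only [Matrix.sub_mul, Matrix.mul_sub, Matrix.mul_one, Matrix.one_mul]
    abel
  have hA' : A = M - (1 - F) * M * (1 - E) := by
    rw [hA, hP, hM]; abel
  have hAeq : A = F * M + M * E - F * M * E := by
    rw [hA', expand]; abel
  have htr : trace (A * Dᵀ) = 0 := by
    rw [hAeq]
    have t1 : trace ((F * M) * Dᵀ) = 0 := by
      rw [trace_mul_comm, ← Matrix.mul_assoc, hDF, Matrix.zero_mul, trace_zero]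
    have t2 : trace ((M * E) * Dᵀ) = 0 := by
      rw [Matrix.mul_assoc, hED, Matrix.mul_zero, trace_zero]
    have t3 : trace ((F * M * E) * Dᵀ) = 0 := by
      rw [Matrix.mul_assoc, hED, Matrix.mul_zero, trace_zero]
    rw [Matrix.sub_mul, Matrix.add_mul, trace_sub, trace_add, t1, t2, t3]
    ring
  have hsum0 : (∑ i, ∑ j, A i j * D i j) = 0 := by
    rw [← htr]
    simp [trace, mul_apply, diag]
  have hTS : T - S = A + D := by rw [hA, hD]; abel
  calc (∑ i, ∑ j, A i j ^ 2) ≤ ∑ i, ∑ j, (A + D) i j ^ 2 := aux_ineq A D hsum0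
    _ = ∑ i, ∑ j, (T - S) i j ^ 2 := by rw [hTS]
end

section
/- Let e ∈ ℝⁿ be nonzero and set E = eeᵀ/‖e‖². Let C = {T ∈ ℝ^{n×n} : Te = e and Tᵀe = e}. Then C is nonempty and, for every T ∈ ℝ^{n×n}, the Frobenius projection of T onto C equals E + (I − E)T(I − E). -/
open Matrix

lemma sumsq_eq_trace {n : ℕ} (X : Matrix (Fin n) (Fin n) ℝ) :
    ∑ i, ∑ j, X i j ^ 2 = (Xᵀ * X).trace := by
  rw [Finset.sum_comm]
  simp [Matrix.trace, Matrix.mul_apply, Matrix.diag, sq]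

/-- For nonzero `e ∈ ℝⁿ` and `E = eeᵀ/‖e‖²`, the set `C = {T : Te = e = Tᵀe}` is nonempty
and the Frobenius projection of `T` onto `C` is `E + (I − E)T(I − E)`. -/
theorem stmt_12 {n : ℕ} (e : Fin n → ℝ) (he : e ≠ 0)
    (E : Matrix (Fin n) (Fin n) ℝ) (hE : E = (e ⬝ᵥ e)⁻¹ • vecMulVec e e)
    (C : Set (Matrix (Fin n) (Fin n) ℝ))
    (hC : C = {T | T.mulVec e = e ∧ T.transpose.mulVec e = e}) :
    C.Nonempty ∧
    ∀ T : Matrix (Fin n) (Fin n) ℝ,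
      (E + (1 - E) * T * (1 - E)) ∈ C ∧
      ∀ S ∈ C,
        (∑ i, ∑ j, (T - (E + (1 - E) * T * (1 - E))) i j ^ 2)
          ≤ ∑ i, ∑ j, (T - S) i j ^ 2 := by
  have hee : e ⬝ᵥ e ≠ 0 := fun h => he ((dotProduct_self_eq_zero).mp h)
  have hEt : Eᵀ = E := by
    rw [hE]; ext i j; simp [Matrix.transpose_apply, vecMulVec_apply, mul_comm]
  have hvm : vecMulVec e e *ᵥ e = (e ⬝ᵥ e) • e := by
    ext i
    simp only [Matrix.mulVec, dotProduct, vecMulVec_apply, Pi.smul_apply, smul_eq_mul,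
      Finset.sum_mul]
    exact Finset.sum_congr rfl fun _ _ => by ring
  have hEe : E *ᵥ e = e := by
    rw [hE, Matrix.smul_mulVec, hvm, smul_smul, inv_mul_cancel₀ hee, one_smul]
  -- E kills matrices M with Me = 0 and Mᵀe = 0
  have hEM : ∀ M : Matrix (Fin n) (Fin n) ℝ, Mᵀ *ᵥ e = 0 → E * M = 0 := by
    intro M hM
    rw [hE]; ext i j
    have h0 : ∑ k, e k * M k j = 0 := by
      have := congrFun hM j
      simpa [Matrix.mulVec, dotProduct, Matrix.transpose_apply, mul_comm] using this
    simp only [Matrix.smul_mul, Matrix.smul_apply, Matrix.mul_apply, vecMulVec_apply,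
      smul_eq_mul, Matrix.zero_apply]
    rw [show ∑ x, (e ⬝ᵥ e)⁻¹ * (e i * e x) * M x j
        = (e ⬝ᵥ e)⁻¹ * e i * ∑ x, e x * M x j by
      rw [Finset.mul_sum]; exact Finset.sum_congr rfl fun _ _ => by ring]
    rw [h0, mul_zero]
  have hME : ∀ M : Matrix (Fin n) (Fin n) ℝ, M *ᵥ e = 0 → M * E = 0 := by
    intro M hM
    have h := hEM Mᵀ (by rwa [Matrix.transpose_transpose])
    have := congrArg Matrix.transpose h
    rwa [Matrix.transpose_mul, Matrix.transpose_transpose, hEt, Matrix.transpose_zero] at this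
  constructor
  · exact ⟨1, by simp [hC, Matrix.one_mulVec]⟩
  · intro T
    set P := E + (1 - E) * T * (1 - E) with hP
    have h1Ee : (1 - E) *ᵥ e = 0 := by
      rw [Matrix.sub_mulVec, Matrix.one_mulVec, hEe, sub_self]
    have hPe : P *ᵥ e = e := by
      rw [hP, Matrix.add_mulVec, hEe, ← Matrix.mulVec_mulVec, h1Ee, Matrix.mulVec_zero, add_zero]
    have hPt : Pᵀ = E + (1 - E) * Tᵀ * (1 - E) := by
      rw [hP]
      simp [Matrix.transpose_add, Matrix.transpose_mul, Matrix.transpose_sub,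
        Matrix.transpose_one, hEt, Matrix.mul_assoc]
    have hPte : Pᵀ *ᵥ e = e := by
      rw [hPt, Matrix.add_mulVec, hEe, ← Matrix.mulVec_mulVec, h1Ee, Matrix.mulVec_zero, add_zero]
    have hPC : P ∈ C := by rw [hC]; exact ⟨hPe, hPte⟩
    refine ⟨hPC, ?_⟩
    intro S hS
    rw [hC] at hS
    set M := P - S with hM
    have hMe : M *ᵥ e = 0 := by
      rw [hM, Matrix.sub_mulVec, hPe, hS.1, sub_self]
    have hMte : Mᵀ *ᵥ e = 0 := by
      rw [hM, Matrix.transpose_sub, Matrix.sub_mulVec, hPte, hS.2, sub_self]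
    have hEM0 : E * M = 0 := hEM M hMte
    have hME0 : M * E = 0 := hME M hMe
    -- decomposition of T - P
    have hTPdec : T - P = E * T * (1 - E) + (T - 1) * E := by
      rw [hP]; noncomm_ring
    -- cross term is zero
    have hcross : ((T - P)ᵀ * M).trace = 0 := by
      rw [hTPdec, Matrix.transpose_add, Matrix.add_mul, Matrix.trace_add]
      have h1 : (E * T * (1 - E))ᵀ * M = 0 := by
        rw [Matrix.transpose_mul, Matrix.transpose_mul, hEt, Matrix.mul_assoc,
          Matrix.mul_assoc, hEM0, Matrix.mul_zero, Matrix.mul_zero]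
      have h2 : (((T - 1) * E)ᵀ * M).trace = 0 := by
        rw [Matrix.transpose_mul, hEt, Matrix.mul_assoc, Matrix.trace_mul_comm,
          Matrix.mul_assoc, hME0, Matrix.mul_zero, Matrix.trace_zero]
      rw [h1, h2, Matrix.trace_zero, zero_add]
    have hTS : T - S = (T - P) + M := by rw [hM]; abel
    rw [sumsq_eq_trace, sumsq_eq_trace, hTS]
    have hexp : (((T - P) + M)ᵀ * ((T - P) + M)).trace
        = ((T - P)ᵀ * (T - P)).trace + ((T - P)ᵀ * M).trace
          + (Mᵀ * (T - P)).trace + (Mᵀ * M).trace := by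
      rw [Matrix.transpose_add, Matrix.add_mul, Matrix.mul_add, Matrix.mul_add,
        Matrix.trace_add, Matrix.trace_add, Matrix.trace_add]
      ring
    have hMA : (Mᵀ * (T - P)).trace = ((T - P)ᵀ * M).trace := by
      rw [← Matrix.trace_transpose (Mᵀ * (T - P)), Matrix.transpose_mul,
        Matrix.transpose_transpose]
    have hMM : 0 ≤ (Mᵀ * M).trace := by
      rw [← sumsq_eq_trace]
      positivity
    rw [hexp, hMA, hcross]
    linarith
end

section
/- Let u = (1,…,1) ∈ ℝⁿ, J = (1/n) uuᵀ, and let G = {T ∈ ℝ^{n×n} : Tu = u = Tᵀu} be the affine set of generalized bistochastic matrices (all row and column sums equal 1). Then for every T ∈ ℝ^{n×n}, the Frobenius projection of T onto G equals J + (I − J)T(I − J). -/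
open Matrix

/-- Khoury's formula: with `u = (1,…,1) ∈ ℝⁿ` (`n ≥ 1`), `J = (1/n) uuᵀ`, and
`G = {T : Tu = u = Tᵀu}` the generalized bistochastic matrices, the Frobenius projection
of any `T` onto `G` is `J + (I − J)T(I − J)`. -/
theorem stmt_13 {n : ℕ} (hn : 1 ≤ n)
    (J : Matrix (Fin n) (Fin n) ℝ)
    (hJ : J = (n : ℝ)⁻¹ • vecMulVec (fun _ => (1 : ℝ)) (fun _ => (1 : ℝ)))
    (G : Set (Matrix (Fin n) (Fin n) ℝ))
    (hG : G = {T | T.mulVec (fun _ => (1 : ℝ)) = (fun _ => (1 : ℝ)) ∧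
      T.transpose.mulVec (fun _ => (1 : ℝ)) = (fun _ => (1 : ℝ))}) :
    ∀ T : Matrix (Fin n) (Fin n) ℝ,
      (J + (1 - J) * T * (1 - J)) ∈ G ∧
      ∀ S ∈ G,
        (∑ i, ∑ j, (T - (J + (1 - J) * T * (1 - J))) i j ^ 2)
          ≤ ∑ i, ∑ j, (T - S) i j ^ 2 := by
  have hn0 : (n : ℝ) ≠ 0 := by
    exact Nat.cast_ne_zero.mpr (by omega)
  set u : Fin n → ℝ := fun _ => (1 : ℝ) with hu
  have hJe : ∀ i j, J i j = (n : ℝ)⁻¹ := by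
    intro i j; rw [hJ]; simp [vecMulVec_apply, hu]
  have hJT : Jᵀ = J := by
    ext i j; simp [transpose_apply, hJe]
  have hJJ : J * J = J := by
    ext i j
    simp [mul_apply, hJe]
    field_simp
  have hJu : J.mulVec u = u := by
    ext i
    simp [mulVec, dotProduct, hJe, hu]
    field_simp
  have hsubu : (1 - J).mulVec u = 0 := by
    rw [Matrix.sub_mulVec, Matrix.one_mulVec, hJu, sub_self]
  intro T
  set P := J + (1 - J) * T * (1 - J) with hP
  have hPu : P.mulVec u = u := by
    rw [hP, Matrix.add_mulVec, ← Matrix.mulVec_mulVec, hsubu, Matrix.mulVec_zero,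
      hJu, add_zero]
  have hPT : Pᵀ = J + (1 - J) * Tᵀ * (1 - J) := by
    rw [hP]
    simp [transpose_add, transpose_mul, transpose_sub, transpose_one, hJT, mul_assoc]
  have hPTu : Pᵀ.mulVec u = u := by
    rw [hPT, Matrix.add_mulVec, ← Matrix.mulVec_mulVec, hsubu, Matrix.mulVec_zero,
      hJu, add_zero]
  constructor
  · rw [hG]; exact ⟨hPu, hPTu⟩
  intro S hS
  rw [hG] at hS
  obtain ⟨hSu, hSTu⟩ := hS
  set D := P - S with hD
  have hDu : D.mulVec u = 0 := by
    rw [hD, Matrix.sub_mulVec, hPu, hSu, sub_self]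
  have hDTu : Dᵀ.mulVec u = 0 := by
    rw [hD, transpose_sub, Matrix.sub_mulVec, hPTu, hSTu, sub_self]
  have hrow : ∀ i, ∑ k, D i k = 0 := by
    intro i
    have := congrFun hDu i
    simpa [mulVec, dotProduct, hu] using this
  have hcol : ∀ j, ∑ k, D k j = 0 := by
    intro j
    have := congrFun hDTu j
    simpa [mulVec, dotProduct, hu, transpose_apply] using this
  have hJD : J * D = 0 := by
    ext i j
    simp [mul_apply, hJe, ← Finset.mul_sum, hcol j]
  have hDJ : D * J = 0 := by
    ext i j
    simp [mul_apply, hJe, ← Finset.sum_mul, hrow i]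
  have hJDT : J * Dᵀ = 0 := by
    have : (D * J)ᵀ = 0 := by rw [hDJ]; simp
    rwa [transpose_mul, hJT] at this
  have hDTJ : Dᵀ * J = 0 := by
    have : (J * D)ᵀ = 0 := by rw [hJD]; simp
    rwa [transpose_mul, hJT] at this
  -- key orthogonality
  have hTP : T - P = J * (T - T * J) + (T - J) * J := by
    rw [hP]
    have : (T - J) * J = T * J - J := by rw [sub_mul, hJJ]
    rw [this]
    noncomm_ring
  have trace_eq : ∀ A B : Matrix (Fin n) (Fin n) ℝ,
      ∑ i, ∑ j, A i j * B i j = Matrix.trace (A * Bᵀ) := by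
    intro A B
    simp [Matrix.trace, Matrix.diag, mul_apply]
  have hcross : ∑ i, ∑ j, (T - P) i j * D i j = 0 := by
    rw [trace_eq, hTP, add_mul, Matrix.trace_add]
    have h1 : J * (T - T * J) * Dᵀ = J * ((T - T * J) * Dᵀ) := by rw [mul_assoc]
    have h2 : Matrix.trace (J * ((T - T * J) * Dᵀ)) = Matrix.trace ((T - T * J) * Dᵀ * J) := by
      rw [Matrix.trace_mul_comm, mul_assoc]
    rw [h1, h2, mul_assoc, hDTJ, Matrix.mul_zero, Matrix.trace_zero, zero_add,
      mul_assoc, hJDT, Matrix.mul_zero, Matrix.trace_zero]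
  have hexp : ∀ i j, (T - S) i j ^ 2 =
      (T - P) i j ^ 2 + 2 * ((T - P) i j * D i j) + D i j ^ 2 := by
    intro i j
    have : (T - S) i j = (T - P) i j + D i j := by
      simp [hD, Matrix.sub_apply, Matrix.add_apply]
    rw [this]; ring
  have hsum : ∑ i, ∑ j, (T - S) i j ^ 2 =
      (∑ i, ∑ j, (T - P) i j ^ 2) + 2 * (∑ i, ∑ j, (T - P) i j * D i j)
        + ∑ i, ∑ j, D i j ^ 2 := by
    simp_rw [hexp, Finset.sum_add_distrib, Finset.mul_sum]
  have hpos : (0 : ℝ) ≤ ∑ i, ∑ j, D i j ^ 2 := by positivity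
  rw [hsum, hcross]
  linarith
end

section
/- Let e ∈ ℝⁿ and f ∈ ℝᵐ be nonzero, and define 𝒜(T) = (Te, Tᵀf) on ℝ^{m×n} with Frobenius inner product. Then for all (y,x) ∈ ℝᵐ × ℝⁿ, 𝒜*𝒜𝒜*(v,u) = 𝒜*(y,x), where (v,u) = ((1/‖e‖²)(y − (⟨y,f⟩/(‖e‖²+‖f‖²)) f), (1/‖f‖²)(x − (⟨x,e⟩/(‖e‖²+‖f‖²)) e)). -/
open Matrix

lemma aux_mulVec_vecMulVec {m n : ℕ} (a : Fin m → ℝ) (b c : Fin n → ℝ) :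
    (vecMulVec a b).mulVec c = (b ⬝ᵥ c) • a := by
  ext i
  simp only [mulVec, vecMulVec_apply, dotProduct, Pi.smul_apply, smul_eq_mul,
    Finset.mul_sum]
  rw [Finset.sum_mul]
  exact Finset.sum_congr rfl fun j _ => by ring

lemma aux_transpose_vecMulVec {m n : ℕ} (a : Fin m → ℝ) (b : Fin n → ℝ) :
    (vecMulVec a b).transpose = vecMulVec b a := by
  ext i j; simp [vecMulVec_apply, mul_comm]

/-- For nonzero `e ∈ ℝⁿ`, `f ∈ ℝᵐ`, with `𝒜(T) = (Te, Tᵀf)` and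
`𝒜*(y,x) = y eᵀ + f xᵀ`, and `(v,u)` as in the projection construction,
`𝒜*𝒜𝒜*(v,u) = 𝒜*(y,x)`. -/
theorem stmt_16 {m n : ℕ} (e : Fin n → ℝ) (f : Fin m → ℝ) (he : e ≠ 0) (hf : f ≠ 0)
    (A : Matrix (Fin m) (Fin n) ℝ → (Fin m → ℝ) × (Fin n → ℝ))
    (hA : ∀ T, A T = (T.mulVec e, T.transpose.mulVec f))
    (Astar : (Fin m → ℝ) × (Fin n → ℝ) → Matrix (Fin m) (Fin n) ℝ)
    (hAstar : ∀ p, Astar p = vecMulVec p.1 e + vecMulVec f p.2)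
    (y : Fin m → ℝ) (x : Fin n → ℝ) (v : Fin m → ℝ) (u : Fin n → ℝ)
    (hv : v = (e ⬝ᵥ e)⁻¹ • (y - ((y ⬝ᵥ f) / (e ⬝ᵥ e + f ⬝ᵥ f)) • f))
    (hu : u = (f ⬝ᵥ f)⁻¹ • (x - ((x ⬝ᵥ e) / (e ⬝ᵥ e + f ⬝ᵥ f)) • e)) :
    Astar (A (Astar (v, u))) = Astar (y, x) := by
  have hee : e ⬝ᵥ e ≠ 0 := fun h => he (dotProduct_self_eq_zero.mp h)
  have hff : f ⬝ᵥ f ≠ 0 := fun h => hf (dotProduct_self_eq_zero.mp h)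
  have hepos : 0 < e ⬝ᵥ e := lt_of_le_of_ne (Finset.sum_nonneg fun i _ => mul_self_nonneg _) (Ne.symm hee)
  have hfpos : 0 < f ⬝ᵥ f := lt_of_le_of_ne (Finset.sum_nonneg fun i _ => mul_self_nonneg _) (Ne.symm hff)
  have hs : e ⬝ᵥ e + f ⬝ᵥ f ≠ 0 := ne_of_gt (add_pos hepos hfpos)
  rw [hAstar, hA, hAstar, hAstar]
  simp only [transpose_add, aux_transpose_vecMulVec, add_mulVec, aux_mulVec_vecMulVec]
  subst hv hu
  ext i j
  simp only [Matrix.add_apply, vecMulVec_apply, Pi.add_apply, Pi.smul_apply, Pi.sub_apply,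
    smul_eq_mul, dotProduct_smul, smul_dotProduct, dotProduct_sub, sub_dotProduct]
  field_simp
  ring
end
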